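/- Let ω be a state on the tensor product A₁ ⊗ A₂ of unital C*-algebras (here take A_i = B(H_i) with H_i finite-dimensional). If the restriction r₁ω, defined by (r₁ω)(A) = ω(A ⊗ 1), is a pure state on A₁, then ω is a product state: ω(A ⊗ B) = (r₁ω)(A)(r₂ω)(B) for all A ∈ A₁, B ∈ A₂. -/

import Mathlib

open Matrix ComplexOrder
open scoped Kronecker

/-- A state on a matrix algebra: a unital positive linear functional. -/
def IsState {n : Type*} [Fintype n] [DecidableEq n]
    (φ : Matrix n n ℂ →ₗ[ℂ] ℂ) : Prop :=
  φ 1 = 1 ∧ ∀ a : Matrix n n ℂ, a.PosSemidef → 0 ≤ φ a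

section Aux

variable {n : Type*} [Fintype n] [DecidableEq n]

lemma aux_psd_vecMulVec (v : n → ℂ) : (vecMulVec v (star v)).PosSemidef := by
  have h : vecMulVec v (star v) = (replicateRow Unit (star v))ᴴ * replicateRow Unit (star v) := by
    rw [conjTranspose_replicateRow, star_star, vecMulVec_eq Unit]
  rw [h]
  exact posSemidef_conjTranspose_mul_self _

lemma aux_polar (u v : n → ℂ) :
    vecMulVec v (star u) =
      (4 : ℂ)⁻¹ • (vecMulVec (v + u) (star (v + u))
        + Complex.I • vecMulVec (v + Complex.I • u) (star (v + Complex.I • u))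
        - vecMulVec (v - u) (star (v - u))
        - Complex.I • vecMulVec (v - Complex.I • u) (star (v - Complex.I • u))) := by
  ext p q
  simp only [vecMulVec_apply, Matrix.smul_apply, Matrix.sub_apply, Matrix.add_apply,
    Pi.star_apply, Pi.add_apply, Pi.sub_apply, Pi.smul_apply, smul_eq_mul, star_add,
    star_sub, star_mul', Complex.star_def, Complex.conj_I]
  have hI := Complex.I_mul_I
  ring_nf
  linear_combination (Complex.I_sq) * ((starRingEnd ℂ) (u q) * v p - u p * (starRingEnd ℂ) (v q)) / 2
    + (Complex.I_sq) * 0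

lemma aux_ext_rankOne (f g : Matrix n n ℂ →ₗ[ℂ] ℂ)
    (h : ∀ v : n → ℂ, f (vecMulVec v (star v)) = g (vecMulVec v (star v))) : f = g := by
  have key : ∀ u v : n → ℂ, f (vecMulVec v (star u)) = g (vecMulVec v (star u)) := by
    intro u v
    rw [aux_polar u v]
    simp only [_root_.map_smul, _root_.map_add, _root_.map_sub, h]
  apply (Matrix.stdBasis ℂ n n).ext
  rintro ⟨i, j⟩
  rw [Matrix.stdBasis_eq_single]
  have : Matrix.single i j (1 : ℂ) = vecMulVec (Pi.single i 1) (star (Pi.single j 1)) := by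
    ext p q
    by_cases h1 : p = i <;> by_cases h2 : q = j <;>
      simp_all [Matrix.single, vecMulVec_apply, Pi.single_apply, eq_comm]
  rw [this]
  exact key _ _

lemma aux_conjTranspose_kron {m : Type*} [Fintype m]
    (A : Matrix n n ℂ) (B : Matrix m m ℂ) : (A ⊗ₖ B)ᴴ = Aᴴ ⊗ₖ Bᴴ := by
  ext ⟨i, j⟩ ⟨p, q⟩
  simp [conjTranspose_apply, kroneckerMap_apply]

lemma aux_psd_kron {m : Type*} [Fintype m] [DecidableEq m] {A : Matrix n n ℂ}
    {B : Matrix m m ℂ} (hA : A.PosSemidef) (hB : B.PosSemidef) : (A ⊗ₖ B).PosSemidef := by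
  exact hA.kronecker hB

/-- A state sends positive semidefinite matrices to nonnegative reals. -/
lemma aux_state_re {φ : Matrix n n ℂ →ₗ[ℂ] ℂ} (hφ : IsState φ) {a : Matrix n n ℂ}
    (ha : a.PosSemidef) : φ a = ((φ a).re : ℂ) ∧ 0 ≤ (φ a).re := by
  have := hφ.2 a ha
  rw [Complex.nonneg_iff] at this
  exact ⟨Complex.ext rfl this.2.symm, this.1⟩

/-- A state is star-preserving. -/
lemma aux_state_star {φ : Matrix n n ℂ →ₗ[ℂ] ℂ} (hφ : IsState φ) (a : Matrix n n ℂ) :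
    φ aᴴ = star (φ a) := by
  let L : Matrix n n ℂ →ₗ[ℂ] ℂ :=
  { toFun := fun a => star (φ aᴴ)
    map_add' := by intro a b; simp [conjTranspose_add, map_add, star_add]
    map_smul' := by
      intro c a
      simp [conjTranspose_smul, star_mul', smul_eq_mul] }
  have hL : L = φ := by
    apply aux_ext_rankOne
    intro v
    have hp := aux_psd_vecMulVec v
    have h0 := hφ.2 _ hp
    have herm : (vecMulVec v (star v))ᴴ = vecMulVec v (star v) := hp.1
    show star (φ _ᴴ) = _
    rw [herm]
    rw [Complex.nonneg_iff] at h0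
    exact Complex.ext rfl (by simp [← h0.2])
  have := LinearMap.congr_fun hL aᴴ
  simp only [L, LinearMap.coe_mk, AddHom.coe_mk, conjTranspose_conjTranspose] at this
  exact this.symm

/-- Cauchy–Schwarz consequence: if `φ(xᴴx) = 0` then `φ(xᴴy) = 0`. -/
lemma aux_cs_zero {φ : Matrix n n ℂ →ₗ[ℂ] ℂ} (hφ : IsState φ) {x y : Matrix n n ℂ}
    (hx : φ (xᴴ * x) = 0) : φ (xᴴ * y) = 0 := by
  set z := φ (xᴴ * y) with hz
  by_contra hzne
  have hyx : φ (yᴴ * x) = star z := by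
    rw [hz, ← aux_state_star hφ, conjTranspose_mul, conjTranspose_conjTranspose]
  have expand : ∀ t : ℝ, 0 ≤ φ (yᴴ * y) - 2 * t * Complex.normSq z := by
    intro t
    set c : ℂ := -(t : ℂ) * z with hc
    have h0 := hφ.2 ((y + c • x)ᴴ * (y + c • x)) (posSemidef_conjTranspose_mul_self _)
    have hexp : (y + c • x)ᴴ * (y + c • x)
        = yᴴ * y + c • (yᴴ * x) + star c • (xᴴ * y) + (star c * c) • (xᴴ * x) := by
      simp only [conjTranspose_add, conjTranspose_smul, add_mul, mul_add, smul_add,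
        smul_mul_assoc, mul_smul_comm, smul_smul]
      rw [mul_comm c (star c)]
      abel
    rw [hexp] at h0
    simp only [_root_.map_add, _root_.map_smul, smul_eq_mul, hx, hyx, mul_zero, add_zero] at h0
    have hsz : star c = -(t : ℂ) * star z := by
      rw [hc]
      simp [star_mul', Complex.star_def, Complex.conj_ofReal, mul_comm]
    have hzz : z * star z = (Complex.normSq z : ℂ) := by
      rw [Complex.star_def]; exact Complex.mul_conj z
    have heq : φ (yᴴ * y) + c * star z + star c * z
        = φ (yᴴ * y) - 2 * t * Complex.normSq z := by
      rw [hc, hsz]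
      linear_combination (-2 * (t : ℂ)) * hzz
    rwa [heq] at h0
  have hypos := aux_state_re hφ (a := yᴴ * y) (posSemidef_conjTranspose_mul_self y)
  set r := (φ (yᴴ * y)).re with hr
  have hreal : ∀ t : ℝ, 0 ≤ r - 2 * t * Complex.normSq z := by
    intro t
    have h := expand t
    rw [hypos.1] at h
    have hcast : ((r - 2 * t * Complex.normSq z : ℝ) : ℂ)
        = (r : ℂ) - 2 * (t : ℂ) * (Complex.normSq z : ℂ) := by push_cast; ring
    rw [← hcast, Complex.zero_le_real] at h
    exact h
  have hzpos : 0 < Complex.normSq z := Complex.normSq_pos.mpr hzne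
  have hfin := hreal ((r + 1) / (2 * Complex.normSq z))
  have h2 : 2 * ((r + 1) / (2 * Complex.normSq z)) * Complex.normSq z = r + 1 := by
    field_simp
  rw [h2] at hfin
  linarith

/-- If `∑ normSq (w j) ≤ 1` then `1 - w wᴴ` is positive semidefinite. -/
lemma aux_one_sub_rankOne_psd (w : n → ℂ) (hw : ∑ j, Complex.normSq (w j) ≤ 1) :
    (1 - vecMulVec w (star w)).PosSemidef := by
  refine Matrix.PosSemidef.of_dotProduct_mulVec_nonneg ?_ ?_
  · exact isHermitian_one.sub (aux_psd_vecMulVec w).1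
  · intro x
    set z := ∑ q, star (w q) * x q with hzdef
    have hmv' : vecMulVec w (star w) *ᵥ x = z • w := by
      ext p
      simp only [mulVec, dotProduct, vecMulVec_apply, Pi.star_apply, Pi.smul_apply,
        smul_eq_mul, mul_assoc]
      rw [← Finset.mul_sum, ← hzdef, mul_comm]
    rw [sub_mulVec, one_mulVec, hmv']
    have h1 : star x ⬝ᵥ x = ((∑ q, Complex.normSq (x q) : ℝ) : ℂ) := by
      push_cast
      simp [dotProduct, Complex.normSq_eq_conj_mul_self]
    have h2 : star x ⬝ᵥ w = star z := by
      rw [hzdef, star_sum]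
      refine Finset.sum_congr rfl fun i _ => ?_
      simp [star_mul', mul_comm]
    have hval : star x ⬝ᵥ (x - z • w)
        = ((∑ q, Complex.normSq (x q) : ℝ) : ℂ) - (Complex.normSq z : ℂ) := by
      rw [dotProduct_sub, dotProduct_smul, h1, h2, smul_eq_mul]
      congr 1
      rw [Complex.star_def]
      exact Complex.mul_conj z
    rw [hval, ← Complex.ofReal_sub, Complex.zero_le_real, sub_nonneg]
    have habs : ‖z‖ ≤ ∑ q, ‖w q‖ * ‖x q‖ := by
      rw [hzdef]
      refine (norm_sum_le _ _).trans_eq ?_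
      congr 1; ext q
      rw [norm_mul, Complex.star_def, Complex.norm_conj]
    have hcs2 := Finset.sum_mul_sq_le_sq_mul_sq Finset.univ
      (fun q => ‖w q‖) (fun q => ‖x q‖)
    calc Complex.normSq z = ‖z‖ ^ 2 := (Complex.sq_norm z).symm
      _ ≤ (∑ q, ‖w q‖ * ‖x q‖) ^ 2 :=
          pow_le_pow_left₀ (norm_nonneg _) habs 2
      _ ≤ (∑ q, (‖w q‖) ^ 2) * (∑ q, (‖x q‖) ^ 2) := hcs2
      _ = (∑ j, Complex.normSq (w j)) * (∑ q, Complex.normSq (x q)) := by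
          simp [Complex.sq_norm]
      _ ≤ 1 * (∑ q, Complex.normSq (x q)) :=
          mul_le_mul_of_nonneg_right hw
            (Finset.sum_nonneg fun q _ => Complex.normSq_nonneg _)
      _ = ∑ q, Complex.normSq (x q) := one_mul _

lemma aux_sqrt {M : Matrix n n ℂ} (hM : M.PosSemidef) :
    ∃ S : Matrix n n ℂ, Sᴴ = S ∧ S * S = M := by
  open scoped MatrixOrder Matrix.Norms.L2Operator in
  obtain ⟨S, hS, hSS⟩ := CStarAlgebra.nonneg_iff_exists_isSelfAdjoint_and_eq_mul_self.mp hM.nonneg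
  exact ⟨S, hS, hSS.symm⟩

lemma aux_kronecker_sub {m : Type*} (A : Matrix n n ℂ) (B C : Matrix m m ℂ) :
    A ⊗ₖ (B - C) = A ⊗ₖ B - A ⊗ₖ C := by
  ext ⟨i, j⟩ ⟨p, q⟩
  simp [kroneckerMap_apply, mul_sub]

lemma aux_psd_smul {M : Matrix n n ℂ} (hM : M.PosSemidef) {r : ℝ} (hr : 0 ≤ r) :
    (((r : ℂ)) • M).PosSemidef := by
  refine Matrix.PosSemidef.of_dotProduct_mulVec_nonneg ?_ ?_
  · have := hM.1
    rw [IsHermitian, conjTranspose_smul, this, Complex.star_def, Complex.conj_ofReal]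
  · intro x
    rw [smul_mulVec, dotProduct_smul, smul_eq_mul]
    exact mul_nonneg (Complex.zero_le_real.mpr hr) (hM.dotProduct_mulVec_nonneg x)

end Aux

/-- If the restriction of a state `ω` on `B(H₁) ⊗ B(H₂)` (finite dimensions, realized
as matrix algebras) to the first factor is pure, then `ω` is a product state. -/
theorem pure_restriction_implies_product
    {k l : ℕ}
    (ω : Matrix (Fin k × Fin l) (Fin k × Fin l) ℂ →ₗ[ℂ] ℂ) (hω : IsState ω)
    (r₁ : Matrix (Fin k) (Fin k) ℂ →ₗ[ℂ] ℂ)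
    (hr₁ : ∀ A : Matrix (Fin k) (Fin k) ℂ, r₁ A = ω (A ⊗ₖ (1 : Matrix (Fin l) (Fin l) ℂ)))
    (hpure : ∀ (φ₁ φ₂ : Matrix (Fin k) (Fin k) ℂ →ₗ[ℂ] ℂ), IsState φ₁ → IsState φ₂ →
      ∀ t : ℝ, 0 < t → t < 1 →
        r₁ = (t : ℂ) • φ₁ + ((1 - t : ℝ) : ℂ) • φ₂ → φ₁ = φ₂) :
    ∀ (A : Matrix (Fin k) (Fin k) ℂ) (B : Matrix (Fin l) (Fin l) ℂ),
      ω (A ⊗ₖ B) = ω (A ⊗ₖ (1 : Matrix (Fin l) (Fin l) ℂ)) *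
        ω ((1 : Matrix (Fin k) (Fin k) ℂ) ⊗ₖ B) := by
  classical
  obtain ⟨hω1, hωpos⟩ := hω
  have hωstate : IsState ω := ⟨hω1, hωpos⟩
  intro A
  -- the linear map `A' ↦ ω (A' ⊗ₖ B)` for fixed `B`
  let mk : Matrix (Fin l) (Fin l) ℂ → (Matrix (Fin k) (Fin k) ℂ →ₗ[ℂ] ℂ) := fun B =>
  { toFun := fun A' => ω (A' ⊗ₖ B)
    map_add' := fun a b => by
      show ω ((a + b) ⊗ₖ B) = ω (a ⊗ₖ B) + ω (b ⊗ₖ B)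
      rw [add_kronecker, _root_.map_add]
    map_smul' := fun c a => by
      show ω ((c • a) ⊗ₖ B) = c • ω (a ⊗ₖ B)
      rw [smul_kronecker, _root_.map_smul] }
  have hone : ((1 : Matrix (Fin k) (Fin k) ℂ) ⊗ₖ (1 : Matrix (Fin l) (Fin l) ℂ))
      = (1 : Matrix (Fin k × Fin l) (Fin k × Fin l) ℂ) := one_kronecker_one
  have hsub : ∀ (A' : Matrix (Fin k) (Fin k) ℂ) (B : Matrix (Fin l) (Fin l) ℂ),
      ω (A' ⊗ₖ (1 - B)) = ω (A' ⊗ₖ 1) - ω (A' ⊗ₖ B) := by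
    intro A' B
    rw [aux_kronecker_sub, map_sub]
  have key : ∀ B : Matrix (Fin l) (Fin l) ℂ, B.PosSemidef → (1 - B).PosSemidef →
      ω (A ⊗ₖ B) = ω (A ⊗ₖ 1) * ω ((1 : Matrix (Fin k) (Fin k) ℂ) ⊗ₖ B) := by
    intro B hB hB1
    set t : ℂ := ω ((1 : Matrix (Fin k) (Fin k) ℂ) ⊗ₖ B) with ht
    have htre := aux_state_re hωstate (aux_psd_kron Matrix.PosSemidef.one hB)
    rw [← ht] at htre
    have ht1' : ω ((1 : Matrix (Fin k) (Fin k) ℂ) ⊗ₖ (1 - B)) = 1 - t := by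
      rw [hsub, hone, hω1, ← ht]
    have h1t := aux_state_re hωstate (aux_psd_kron Matrix.PosSemidef.one hB1)
    rw [ht1'] at h1t
    set tr := t.re with htr
    have htt : t = (tr : ℂ) := htre.1
    have htr0 : 0 ≤ tr := htre.2
    have htr1 : tr ≤ 1 := by
      have h := h1t.2
      rw [Complex.sub_re, Complex.one_re] at h
      linarith
    rcases eq_or_lt_of_le htr0 with h0 | h0
    · -- t = 0
      have ht0 : t = 0 := by rw [htt, ← h0]; simp
      obtain ⟨S, hCh, hSS⟩ := aux_sqrt hB
      have hx : ((1 : Matrix (Fin k) (Fin k) ℂ) ⊗ₖ S)ᴴ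
          * ((1 : Matrix (Fin k) (Fin k) ℂ) ⊗ₖ S)
          = (1 : Matrix (Fin k) (Fin k) ℂ) ⊗ₖ B := by
        rw [aux_conjTranspose_kron, hCh, conjTranspose_one, ← mul_kronecker_mul, one_mul,
          hSS]
      have hy : ((1 : Matrix (Fin k) (Fin k) ℂ) ⊗ₖ S)ᴴ * (A ⊗ₖ S)
          = A ⊗ₖ B := by
        rw [aux_conjTranspose_kron, hCh, conjTranspose_one, ← mul_kronecker_mul, one_mul,
          hSS]
      have hz := aux_cs_zero hωstate (x := (1 : Matrix (Fin k) (Fin k) ℂ) ⊗ₖ S)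
        (y := A ⊗ₖ S) (by rw [hx, ← ht]; exact ht0)
      rw [hy] at hz
      rw [hz, ht0, mul_zero]
    rcases eq_or_lt_of_le htr1 with h1 | h1
    · -- t = 1
      have ht1 : ω ((1 : Matrix (Fin k) (Fin k) ℂ) ⊗ₖ (1 - B)) = 0 := by
        rw [ht1', htt, h1]; simp
      obtain ⟨S, hCh, hSS⟩ := aux_sqrt hB1
      have hx : ((1 : Matrix (Fin k) (Fin k) ℂ) ⊗ₖ S)ᴴ
          * ((1 : Matrix (Fin k) (Fin k) ℂ) ⊗ₖ S)
          = (1 : Matrix (Fin k) (Fin k) ℂ) ⊗ₖ (1 - B) := by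
        rw [aux_conjTranspose_kron, hCh, conjTranspose_one, ← mul_kronecker_mul, one_mul,
          hSS]
      have hy : ((1 : Matrix (Fin k) (Fin k) ℂ) ⊗ₖ S)ᴴ * (A ⊗ₖ S)
          = A ⊗ₖ (1 - B) := by
        rw [aux_conjTranspose_kron, hCh, conjTranspose_one, ← mul_kronecker_mul, one_mul,
          hSS]
      have hz := aux_cs_zero hωstate (x := (1 : Matrix (Fin k) (Fin k) ℂ) ⊗ₖ S)
        (y := A ⊗ₖ S) (by rw [hx]; exact ht1)
      rw [hy, hsub] at hz
      have htone : t = 1 := by rw [htt, h1]; simp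
      rw [htone, mul_one]
      linear_combination -hz
    · -- 0 < tr < 1
      have htne : t ≠ 0 := by
        rw [htt]
        exact Complex.ofReal_ne_zero.mpr (ne_of_gt h0)
      have h1tne : (1 : ℂ) - t ≠ 0 := by
        rw [htt, ← Complex.ofReal_one, ← Complex.ofReal_sub]
        exact Complex.ofReal_ne_zero.mpr (by linarith)
      set φ₁ := t⁻¹ • mk B with hφ₁
      set φ₂ := ((1 : ℂ) - t)⁻¹ • mk (1 - B) with hφ₂
      have hs₁ : IsState φ₁ := by
        constructor
        · show t⁻¹ * ω ((1 : Matrix (Fin k) (Fin k) ℂ) ⊗ₖ B) = 1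
          rw [← ht, inv_mul_cancel₀ htne]
        · intro a ha
          have hp1 : 0 ≤ ω (a ⊗ₖ B) := hωpos _ (aux_psd_kron ha hB)
          have hp2 : (0 : ℂ) ≤ t⁻¹ := by
            rw [htt, ← Complex.ofReal_inv]
            exact Complex.zero_le_real.mpr (inv_nonneg.mpr h0.le)
          exact mul_nonneg hp2 hp1
      have hs₂ : IsState φ₂ := by
        constructor
        · show ((1 : ℂ) - t)⁻¹ * ω ((1 : Matrix (Fin k) (Fin k) ℂ) ⊗ₖ (1 - B)) = 1
          rw [ht1', inv_mul_cancel₀ h1tne]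
        · intro a ha
          have hp1 : 0 ≤ ω (a ⊗ₖ (1 - B)) := hωpos _ (aux_psd_kron ha hB1)
          have hp2 : (0 : ℂ) ≤ ((1 : ℂ) - t)⁻¹ := by
            rw [htt, ← Complex.ofReal_one, ← Complex.ofReal_sub, ← Complex.ofReal_inv]
            exact Complex.zero_le_real.mpr (inv_nonneg.mpr (by linarith))
          exact mul_nonneg hp2 hp1
      have hdecomp : r₁ = (tr : ℂ) • φ₁ + ((1 - tr : ℝ) : ℂ) • φ₂ := by
        apply LinearMap.ext; intro A'
        rw [hr₁]
        show ω (A' ⊗ₖ 1) = (tr : ℂ) * (t⁻¹ * ω (A' ⊗ₖ B))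
          + ((1 - tr : ℝ) : ℂ) * (((1 : ℂ) - t)⁻¹ * ω (A' ⊗ₖ (1 - B)))
        rw [hsub]
        have e1 : ((tr : ℝ) : ℂ) = t := htt.symm
        have e2 : ((1 - tr : ℝ) : ℂ) = 1 - t := by push_cast; rw [← htt]
        rw [e1, e2]
        field_simp
        ring
      have heq := hpure φ₁ φ₂ hs₁ hs₂ tr h0 h1 hdecomp
      have hAeq := LinearMap.congr_fun heq A
      have hAeq' : t⁻¹ * ω (A ⊗ₖ B)
          = ((1 : ℂ) - t)⁻¹ * (ω (A ⊗ₖ 1) - ω (A ⊗ₖ B)) := by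
        have := hAeq
        simp only [hφ₁, hφ₂, LinearMap.smul_apply, smul_eq_mul] at this
        rw [show (mk B) A = ω (A ⊗ₖ B) from rfl,
          show (mk (1 - B)) A = ω (A ⊗ₖ (1 - B)) from rfl, hsub] at this
        exact this
      field_simp at hAeq'
      linear_combination hAeq'
  -- rank-one matrices
  have rank1 : ∀ v : Fin l → ℂ, ω (A ⊗ₖ vecMulVec v (star v))
      = ω (A ⊗ₖ 1) * ω ((1 : Matrix (Fin k) (Fin k) ℂ) ⊗ₖ vecMulVec v (star v)) := by
    intro v
    by_cases hv : ∑ j, Complex.normSq (v j) = 0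
    · have hv0 : ∀ j, v j = 0 := by
        intro j
        exact Complex.normSq_eq_zero.mp
          ((Finset.sum_eq_zero_iff_of_nonneg fun i _ => Complex.normSq_nonneg (v i)).mp hv
            j (Finset.mem_univ j))
      have hvv : vecMulVec v (star v) = 0 := by
        ext p q; simp [vecMulVec_apply, hv0]
      rw [hvv, kronecker_zero, kronecker_zero, map_zero, mul_zero]
    · set c : ℝ := ∑ j, Complex.normSq (v j) with hc
      have hcpos : 0 < c :=
        lt_of_le_of_ne (Finset.sum_nonneg fun i _ => Complex.normSq_nonneg _) (Ne.symm hv)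
      set a : ℂ := (((Real.sqrt c)⁻¹ : ℝ) : ℂ) with ha
      set w : Fin l → ℂ := fun j => a * v j with hwdef
      have haa : a * a = (((c⁻¹ : ℝ)) : ℂ) := by
        rw [ha, ← Complex.ofReal_mul, ← mul_inv, Real.mul_self_sqrt hcpos.le,
          Complex.ofReal_inv]
      have hwv : vecMulVec w (star w) = (((c⁻¹ : ℝ)) : ℂ) • vecMulVec v (star v) := by
        ext p q
        simp only [vecMulVec_apply, Pi.star_apply, hwdef, star_mul', Matrix.smul_apply,
          smul_eq_mul, ha, Complex.star_def, Complex.conj_ofReal]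
        rw [← ha, ← haa]
        ring
      have hsum : ∑ j, Complex.normSq (w j) = 1 := by
        have : ∀ j, Complex.normSq (w j) = (Real.sqrt c)⁻¹ ^ 2 * Complex.normSq (v j) := by
          intro j
          rw [hwdef, Complex.normSq_mul, ha, Complex.normSq_ofReal]
          ring
        rw [Finset.sum_congr rfl fun j _ => this j, ← Finset.mul_sum, ← hc,
          inv_pow, Real.sq_sqrt hcpos.le]
        field_simp
      have hpsd₀ : ((((c⁻¹ : ℝ)) : ℂ) • vecMulVec v (star v)).PosSemidef :=
        hwv ▸ aux_psd_vecMulVec w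
      have h1psd : ((1 : Matrix (Fin l) (Fin l) ℂ)
          - (((c⁻¹ : ℝ)) : ℂ) • vecMulVec v (star v)).PosSemidef :=
        hwv ▸ aux_one_sub_rankOne_psd w (le_of_eq hsum)
      have hkey := key _ hpsd₀ h1psd
      have hexp : ∀ M : Matrix (Fin k) (Fin k) ℂ,
          ω (M ⊗ₖ ((((c⁻¹ : ℝ)) : ℂ) • vecMulVec v (star v)))
          = (((c⁻¹ : ℝ)) : ℂ) * ω (M ⊗ₖ vecMulVec v (star v)) := by
        intro M
        rw [kronecker_smul, _root_.map_smul, smul_eq_mul]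
      rw [hexp, hexp] at hkey
      have hcne : ((((c⁻¹ : ℝ)) : ℂ)) ≠ 0 := by
        rw [Complex.ofReal_ne_zero]
        positivity
      apply mul_left_cancel₀ hcne
      linear_combination hkey
  -- conclude by linearity
  intro B
  let F : Matrix (Fin l) (Fin l) ℂ →ₗ[ℂ] ℂ :=
  { toFun := fun B => ω (A ⊗ₖ B)
    map_add' := fun a b => by
      show ω (A ⊗ₖ (a + b)) = ω (A ⊗ₖ a) + ω (A ⊗ₖ b)
      rw [kronecker_add, _root_.map_add]
    map_smul' := fun cc a => by
      show ω (A ⊗ₖ (cc • a)) = cc • ω (A ⊗ₖ a)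
      rw [kronecker_smul, _root_.map_smul] }
  let G : Matrix (Fin l) (Fin l) ℂ →ₗ[ℂ] ℂ :=
  { toFun := fun B => ω (A ⊗ₖ 1) * ω ((1 : Matrix (Fin k) (Fin k) ℂ) ⊗ₖ B)
    map_add' := fun a b => by
      show ω (A ⊗ₖ 1) * ω ((1 : Matrix (Fin k) (Fin k) ℂ) ⊗ₖ (a + b)) = _
      rw [kronecker_add, _root_.map_add, mul_add]
    map_smul' := fun cc a => by
      show ω (A ⊗ₖ 1) * ω ((1 : Matrix (Fin k) (Fin k) ℂ) ⊗ₖ (cc • a))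
        = cc • (ω (A ⊗ₖ 1) * ω ((1 : Matrix (Fin k) (Fin k) ℂ) ⊗ₖ a))
      rw [kronecker_smul, _root_.map_smul, smul_eq_mul, smul_eq_mul]
      ring }
  exact LinearMap.congr_fun (aux_ext_rankOne F G rank1) B
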